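/- Suppose all storage sizes l_i lie strictly inside [0,L] at the optimum (interior case, Ñ = n). Then the optimal storage size is l_i = T + (ln W_i - Σ_{j=1}^n p_j ln W_j)/ln r, which satisfies Σ_{i=1}^n p_i l_i = T. -/

import Mathlib

open Finset Real

theorem stmt_8 (n : ℕ) (p W : Fin n → ℝ)
    (hp : ∀ i, 0 < p i) (hsum : ∑ i, p i = 1) (hW : ∀ i, 0 < W i)
    (r T : ℝ) (hr : 1 < r)
    (l : Fin n → ℝ)
    (hl : ∀ i, l i = T + (Real.log (W i) - ∑ j, p j * Real.log (W j)) / Real.log r) :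
    (∑ i, p i * l i = T) ∧
    ∀ m : Fin n → ℝ, (∑ i, p i * m i = T) →
      ∑ i, p i * W i * r ^ (-(l i)) ≤ ∑ i, p i * W i * r ^ (-(m i)) := by
  have hR : 0 < Real.log r := Real.log_pos hr
  have hr0 : 0 < r := lt_trans zero_lt_one hr
  set S := ∑ j, p j * Real.log (W j) with hS
  have h1 : ∑ i, p i * l i = T := by
    have hterm : ∀ i ∈ Finset.univ, p i * l i
        = p i * T + (p i * Real.log (W i) - p i * S) / Real.log r := by
      intro i _
      rw [hl i]
      field_simp
    rw [Finset.sum_congr rfl hterm, Finset.sum_add_distrib, ← Finset.sum_div,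
      Finset.sum_sub_distrib, ← Finset.sum_mul, ← Finset.sum_mul, hsum]
    simp
    exact Or.inl (sub_eq_zero.mpr hS.symm)
  refine ⟨h1, ?_⟩
  intro m hm
  have hexp : ∀ (x : Fin n → ℝ) (i : Fin n),
      W i * r ^ (-(x i)) = Real.exp (Real.log (W i) - x i * Real.log r) := by
    intro x i
    rw [Real.rpow_def_of_pos hr0, ← Real.exp_log (hW i), ← Real.exp_add]
    congr 1
    rw [Real.log_exp]
    ring
  have hLHS : ∑ i, p i * W i * r ^ (-(l i)) = Real.exp (S - T * Real.log r) := by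
    have : ∀ i ∈ Finset.univ, p i * W i * r ^ (-(l i))
        = p i * Real.exp (S - T * Real.log r) := by
      intro i _
      rw [mul_assoc, hexp l i, hl i]
      congr 2
      field_simp
      ring
    rw [Finset.sum_congr rfl this, ← Finset.sum_mul, hsum, one_mul]
  rw [hLHS]
  have hJ := convexOn_exp.map_sum_le (t := Finset.univ) (w := p)
    (p := fun i => Real.log (W i) - m i * Real.log r)
    (fun i _ => (hp i).le) hsum (fun i _ => Set.mem_univ _)
  have harg : ∑ i, p i • (Real.log (W i) - m i * Real.log r) = S - T * Real.log r := by
    have h2 : ∑ i, p i * (m i * Real.log r) = T * Real.log r := by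
      rw [← hm, Finset.sum_mul]
      exact Finset.sum_congr rfl (fun i _ => by ring)
    simp only [smul_eq_mul, mul_sub, Finset.sum_sub_distrib, h2, hS]
  rw [harg] at hJ
  refine hJ.trans_eq ?_
  refine Finset.sum_congr rfl (fun i _ => ?_)
  rw [smul_eq_mul, ← hexp m i, mul_assoc]
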